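/- Let 𝓜 ⊆ 𝓖 be a further sub-σ-algebra of 𝓕 and let X : Ω → ℝ be a bounded 𝓖-measurable random variable. Then P-almost surely, E[X · 1_{{A < Φ}} | 𝓜] = E[X · e^{−A} | 𝓜]. (This is the computational core of the paper's Survival Benefit proposition: the time-t fair value of a time-T survival benefit C_T satisfies E[e^{−∫_t^T r_s ds} 1_{{τ>T}} C_T | 𝒢_t] = E[e^{−∫_t^T (r_s+μ_s) ds} C_T | 𝒢_t], with X the discounted benefit e^{−∫_t^T r_s ds} C_T and A = ∫_0^T μ_s ds.) -/

import Mathlib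

open MeasureTheory ProbabilityTheory

lemma survival_key {Ω : Type*} {mF : MeasurableSpace Ω}
    (P : Measure Ω) [IsProbabilityMeasure P]
    (Φ : Ω → ℝ) (hΦ : Measurable Φ)
    (hlaw : ∀ s : ℝ, 0 ≤ s → P {ω | s < Φ ω} = ENNReal.ofReal (Real.exp (-s)))
    (G : MeasurableSpace Ω) (hG : G ≤ mF)
    (hindep : Indep (MeasurableSpace.comap Φ inferInstance) G P)
    (A : Ω → ℝ) (hA : Measurable[G] A) (hA0 : ∀ ω, 0 ≤ A ω)
    (Y : Ω → ℝ) (hY : Measurable[G] Y) (C : ℝ) (hYb : ∀ ω, |Y ω| ≤ C) :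
    ∫ ω, Y ω * Set.indicator {ω | A ω < Φ ω} (fun _ => (1 : ℝ)) ω ∂P
      = ∫ ω, Y ω * Real.exp (-A ω) ∂P := by
  letI : MeasurableSpace Ω := mF
  set T : Ω → ℝ × ℝ := fun ω => (A ω, Y ω) with hTdef
  have hTG : Measurable[G] T := hA.prodMk hY
  have hT : Measurable[mF] T := hTG.mono hG le_rfl
  have hAm : Measurable[mF] A := hA.mono hG le_rfl
  have hYm : Measurable[mF] Y := hY.mono hG le_rfl
  have hIndep : IndepFun T Φ P := indep_of_indep_of_le_left hindep.symm hTG.comap_le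
  have hmap : P.map (fun ω => (T ω, Φ ω)) = (P.map T).prod (P.map Φ) :=
    (indepFun_iff_map_prod_eq_prod_map_map hT.aemeasurable hΦ.aemeasurable).mp hIndep
  set F : (ℝ × ℝ) × ℝ → ℝ := fun p => if p.1.1 < p.2 then p.1.2 else 0 with hFdef
  have hFm : Measurable F := by
    exact Measurable.ite (measurableSet_lt (measurable_fst.fst) measurable_snd)
      (measurable_fst.snd) measurable_const
  have hpair : Measurable[mF] (fun ω => (T ω, Φ ω)) := hT.prodMk hΦ
  have hcompInt : Integrable (fun ω => F (T ω, Φ ω)) P := by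
    refine ⟨(hFm.comp hpair).aestronglyMeasurable, ?_⟩
    refine HasFiniteIntegral.of_bounded (C := |C|) (ae_of_all _ fun ω => ?_)
    simp only [hFdef, hTdef, Real.norm_eq_abs]
    split
    · exact (hYb ω).trans (le_abs_self C)
    · simp [abs_nonneg]
  have hFint : Integrable F ((P.map T).prod (P.map Φ)) := by
    rw [← hmap]
    exact (integrable_map_measure (hFm.aestronglyMeasurable) hpair.aemeasurable).mpr hcompInt
  have h1 : ∫ ω, Y ω * Set.indicator {ω | A ω < Φ ω} (fun _ => (1 : ℝ)) ω ∂P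
      = ∫ ω, F (T ω, Φ ω) ∂P := by
    refine integral_congr_ae (ae_of_all _ fun ω => ?_)
    simp only [hFdef, hTdef, Set.indicator_apply, Set.mem_setOf_eq]
    split <;> ring
  have h2 : ∫ ω, F (T ω, Φ ω) ∂P = ∫ p, F p ∂((P.map T).prod (P.map Φ)) := by
    rw [← hmap, integral_map hpair.aemeasurable hFm.aestronglyMeasurable]
  have h3 : ∫ p, F p ∂((P.map T).prod (P.map Φ))
      = ∫ t, (∫ φ, F (t, φ) ∂(P.map Φ)) ∂(P.map T) := integral_prod F hFint
  have hinner : ∀ t : ℝ × ℝ, ∫ φ, F (t, φ) ∂(P.map Φ)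
      = ((P.map Φ) (Set.Ioi t.1)).toReal • t.2 := by
    intro t
    have : (fun φ => F (t, φ)) = Set.indicator (Set.Ioi t.1) (fun _ => t.2) := by
      funext φ
      simp only [hFdef, Set.indicator_apply, Set.mem_Ioi]
    rw [this, integral_indicator_const _ measurableSet_Ioi]
    rfl
  have hlaw' : ∀ a : ℝ, 0 ≤ a → ((P.map Φ) (Set.Ioi a)).toReal = Real.exp (-a) := by
    intro a ha
    rw [Measure.map_apply hΦ measurableSet_Ioi]
    have : Φ ⁻¹' Set.Ioi a = {ω | a < Φ ω} := rfl
    rw [this, hlaw a ha, ENNReal.toReal_ofReal (Real.exp_pos _).le]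
  have hae : ∀ᵐ t ∂(P.map T), 0 ≤ t.1 := by
    rw [ae_map_iff hT.aemeasurable (measurableSet_le measurable_const measurable_fst)]
    exact ae_of_all _ fun ω => hA0 ω
  have h4 : ∫ t, (∫ φ, F (t, φ) ∂(P.map Φ)) ∂(P.map T)
      = ∫ t : ℝ × ℝ, t.2 * Real.exp (-t.1) ∂(P.map T) := by
    refine integral_congr_ae ?_
    filter_upwards [hae] with t ht
    rw [hinner t, hlaw' t.1 ht, smul_eq_mul, mul_comm]
  have h5 : ∫ t : ℝ × ℝ, t.2 * Real.exp (-t.1) ∂(P.map T)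
      = ∫ ω, Y ω * Real.exp (-A ω) ∂P := by
    rw [integral_map hT.aemeasurable]
    exact (measurable_snd.mul ((measurable_fst.neg).exp)).aestronglyMeasurable
  rw [h1, h2, h3, h4, h5]

/-- **Survival benefit valuation (core computation).**
`Φ` is exponential with rate 1, independent of the sub-σ-algebra `𝓖`, `A` is a
nonnegative `𝓖`-measurable random variable, and `X` is a bounded `𝓖`-measurable
random variable.  For any further sub-σ-algebra `𝓜 ⊆ 𝓖`,
`E[X · 1_{A < Φ} | 𝓜] = E[X · e^{-A} | 𝓜]` almost surely. -/
theorem survival_benefit_condexp {Ω : Type*} {mF : MeasurableSpace Ω}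
    (P : Measure Ω) [IsProbabilityMeasure P]
    (Φ : Ω → ℝ) (hΦ : Measurable Φ)
    (hlaw : ∀ s : ℝ, 0 ≤ s → P {ω | s < Φ ω} = ENNReal.ofReal (Real.exp (-s)))
    (G : MeasurableSpace Ω) (hG : G ≤ mF)
    (hindep : Indep (MeasurableSpace.comap Φ inferInstance) G P)
    (A : Ω → ℝ) (hA : Measurable[G] A) (hA0 : ∀ ω, 0 ≤ A ω)
    (M : MeasurableSpace Ω) (hM : M ≤ G)
    (X : Ω → ℝ) (hX : Measurable[G] X) (hXb : ∃ C : ℝ, ∀ ω, |X ω| ≤ C) :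
    P[fun ω => X ω * Set.indicator {ω | A ω < Φ ω} (fun _ => (1 : ℝ)) ω | M]
      =ᵐ[P] P[fun ω => X ω * Real.exp (-A ω) | M] := by
  letI : MeasurableSpace Ω := mF
  obtain ⟨C, hC⟩ := hXb
  have hm : M ≤ mF := hM.trans hG
  have hXm : Measurable[mF] X := hX.mono hG le_rfl
  have hAm : Measurable[mF] A := hA.mono hG le_rfl
  have hSet : MeasurableSet[mF] {ω | A ω < Φ ω} := measurableSet_lt hAm hΦ
  set f : Ω → ℝ := fun ω => X ω * Set.indicator {ω | A ω < Φ ω} (fun _ => (1 : ℝ)) ω with hfdef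
  set g₀ : Ω → ℝ := fun ω => X ω * Real.exp (-A ω) with hg₀def
  have hfm : Measurable[mF] f :=
    hXm.mul (measurable_const.indicator hSet)
  have hg₀m : Measurable[mF] g₀ := hXm.mul ((hAm.neg).exp)
  have hfint : Integrable f P := by
    refine ⟨hfm.aestronglyMeasurable, ?_⟩
    refine HasFiniteIntegral.of_bounded (C := |C|) (ae_of_all _ fun ω => ?_)
    simp only [hfdef, Real.norm_eq_abs, abs_mul, Set.indicator_apply]
    split
    · simpa using (hC ω).trans (le_abs_self C)
    · simp [abs_nonneg]
  have hg₀int : Integrable g₀ P := by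
    refine ⟨hg₀m.aestronglyMeasurable, ?_⟩
    refine HasFiniteIntegral.of_bounded (C := |C|) (ae_of_all _ fun ω => ?_)
    simp only [hg₀def, Real.norm_eq_abs, abs_mul]
    calc |X ω| * |Real.exp (-A ω)| ≤ |C| * 1 := by
          refine mul_le_mul ((hC ω).trans (le_abs_self C)) ?_ (abs_nonneg _) (abs_nonneg _)
          rw [abs_of_pos (Real.exp_pos _)]
          exact Real.exp_le_one_iff.mpr (neg_nonpos.mpr (hA0 ω))
      _ = |C| := mul_one _
  refine (ae_eq_condExp_of_forall_setIntegral_eq hm hfint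
    (fun s _ _ => integrable_condExp.integrableOn) (fun s hs hμs => ?_)
    (StronglyMeasurable.aestronglyMeasurable stronglyMeasurable_condExp)).symm
  rw [setIntegral_condExp hm hg₀int hs]
  -- now: ∫ x in s, g₀ x ∂P = ∫ x in s, f x ∂P
  set Y : Ω → ℝ := fun ω => X ω * Set.indicator s (fun _ => (1 : ℝ)) ω with hYdef
  have hYG : Measurable[G] Y := hX.mul (measurable_const.indicator (hM s hs))
  have hYb : ∀ ω, |Y ω| ≤ |C| := by
    intro ω
    by_cases h : ω ∈ s
    · simp only [hYdef, Set.indicator_of_mem h, mul_one]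
      exact (hC ω).trans (le_abs_self C)
    · simp [hYdef, Set.indicator_of_notMem h, abs_nonneg]
  have key := survival_key P Φ hΦ hlaw G hG hindep A hA hA0 Y hYG |C| hYb
  have hsm : MeasurableSet[mF] s := hm s hs
  have e1 : ∫ x in s, g₀ x ∂P = ∫ ω, Y ω * Real.exp (-A ω) ∂P := by
    rw [← integral_indicator hsm]
    refine integral_congr_ae (ae_of_all _ fun ω => ?_)
    by_cases h : ω ∈ s
    · simp [hg₀def, hYdef, Set.indicator_of_mem h]
    · simp [hg₀def, hYdef, Set.indicator_of_notMem h]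
  have e2 : ∫ x in s, f x ∂P
      = ∫ ω, Y ω * Set.indicator {ω | A ω < Φ ω} (fun _ => (1 : ℝ)) ω ∂P := by
    rw [← integral_indicator hsm]
    refine integral_congr_ae (ae_of_all _ fun ω => ?_)
    by_cases h : ω ∈ s
    · simp only [hfdef, hYdef, Set.indicator_of_mem h, mul_one]
    · simp [hfdef, hYdef, Set.indicator_of_notMem h]
  rw [e1, e2, key]
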